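/- A finite distributive lattice is Boolean if and only if its length equals the number of its atoms. -/

import Mathlib

open Order

section Aux

variable {α : Type*} [DistribLattice α] [BoundedOrder α] [Fintype α]

private lemma aux_isAtom_supIrred {a : α} (ha : IsAtom a) : SupIrred a := by
  constructor
  · intro hmin
    exact ha.1 (le_bot_iff.mp (hmin bot_le))
  · rintro b c rfl
    rcases eq_or_lt_of_le (le_sup_left : b ≤ b ⊔ c) with h | h
    · exact Or.inl h
    · right
      rw [ha.2 b h, bot_sup_eq]

/-- Every supremum-irreducible element dominates chains; auxiliary chain construction. -/
private lemma aux_chain (s : Finset α) (hs : ∀ b ∈ s, SupIrred b) :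
    ∃ p : LTSeries α, p.length = s.card ∧ p.last = s.sup id := by
  classical
  induction s using Finset.strongInduction with
  | _ s ih =>
    rcases s.eq_empty_or_nonempty with rfl | hne
    · exact ⟨RelSeries.singleton _ ⊥, by simp [RelSeries.last]; rfl⟩
    · obtain ⟨m, hm, hmax⟩ := s.exists_maximal hne
      obtain ⟨p, hlen, hlast⟩ := ih (s.erase m) (Finset.erase_ssubset hm)
        (fun b hb => hs b (Finset.mem_of_mem_erase hb))
      have hlt : p.last < s.sup id := by
        rw [hlast]
        refine lt_of_le_of_ne (Finset.sup_mono (Finset.erase_subset _ _)) fun h => ?_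
        have hmle : m ≤ (s.erase m).sup id := h ▸ Finset.le_sup (f := id) hm
        obtain ⟨b, hb, hmb⟩ := ((hs m hm).supPrime.le_finset_sup).mp hmle
        rcases hmb.lt_or_eq with hlt' | rfl
        · exact hlt'.not_ge (hmax (Finset.mem_of_mem_erase hb) hlt'.le)
        · exact (Finset.ne_of_mem_erase hb) rfl
      refine ⟨p.snoc (s.sup id) hlt, ?_, ?_⟩
      · simp [hlen, Finset.card_erase_add_one hm]
      · simp

end Aux

/-- A finite distributive lattice is Boolean iff its length equals the number of its atoms. -/
theorem finite_distrib_boolean_iff_length_eq_card_atoms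
    {α : Type*} [DistribLattice α] [BoundedOrder α] [Fintype α] :
    ComplementedLattice α ↔
      Order.krullDim α = ({a : α | IsAtom a}.ncard : ℕ) := by
  classical
  -- the finset of sup-irreducible elements
  set J : Finset α := Finset.univ.filter (fun a => SupIrred a) with hJ
  set A : Finset α := Finset.univ.filter (fun a => IsAtom a) with hA
  have hAJ : A ⊆ J := by
    intro a ha
    simp only [hA, hJ, Finset.mem_filter, Finset.mem_univ, true_and] at ha ⊢
    exact aux_isAtom_supIrred ha
  have hAcard : ({a : α | IsAtom a}.ncard : ℕ) = A.card := by
    rw [hA]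
    rw [Set.ncard_eq_toFinset_card' ]
    congr 1
    ext a
    simp
  -- krullDim α = J.card
  have hdim : Order.krullDim α = (J.card : ℕ) := by
    apply le_antisymm
    · -- upper bound: strictly monotone map into ℕ via counting sup-irreducibles below
      have hg : StrictMono (fun a : α => (J.filter (fun j => j ≤ a)).card) := by
        intro a b hab
        apply Finset.card_lt_card
        refine (Finset.ssubset_iff_of_subset
          (Finset.monotone_filter_right J (fun j _ hj => le_trans hj hab.le))).mpr ?_
        · -- there is a sup-irreducible ≤ b not ≤ a
          by_contra h
          push_neg at h
          obtain ⟨s, hsup, hirr⟩ := exists_supIrred_decomposition b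
          have : b ≤ a := by
            rw [← hsup]
            apply Finset.sup_le
            intro c hc
            have hcJ : c ∈ J.filter (fun j => j ≤ b) := by
              simp only [hJ, Finset.mem_filter, Finset.mem_univ, true_and]
              exact ⟨hirr hc, hsup ▸ Finset.le_sup (f := id) hc⟩
            have := h c hcJ
            simp only [Finset.mem_filter] at this
            exact this.2
          exact absurd this hab.not_ge
      have hb : ∀ p : LTSeries α, p.length ≤ J.card := by
        intro p
        -- length ≤ J.card via the strictly monotone chain of counts
        set g := fun a : α => (J.filter (fun j => j ≤ a)).card
        have h1 : ∀ i : Fin (p.length + 1), (i : ℕ) ≤ g (p i) := by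
          intro i
          induction i using Fin.induction with
          | zero => simp
          | succ i ih =>
            have := hg (p.strictMono (Fin.castSucc_lt_succ : i.castSucc < i.succ))
            have hv : (i.succ : ℕ) = (i.castSucc : ℕ) + 1 := by simp
            omega
        have h2 : g p.last ≤ J.card :=
          Finset.card_le_card (Finset.filter_subset _ _)
        have := h1 (Fin.last _)
        simp only [Fin.val_last] at this
        exact this.trans h2
      rw [Order.krullDim_eq_iSup_length]
      exact_mod_cast iSup_le fun p : LTSeries α => (Nat.cast_le.mpr (hb p) : (p.length : ℕ∞) ≤ (J.card : ℕ∞))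
    · obtain ⟨p, hlen, -⟩ := aux_chain J (fun b hb => by
        simpa [hJ] using (Finset.mem_filter.mp hb).2)
      calc ((J.card : ℕ) : WithBot ℕ∞) = (p.length : ℕ) := by rw [hlen]
        _ ≤ Order.krullDim α := Order.LTSeries.length_le_krullDim p
  rw [hdim, hAcard, Nat.cast_inj]
  constructor
  · -- complemented → every sup-irreducible is an atom → J = A
    intro hc
    have hJA : J ⊆ A := by
      intro a haJ
      simp only [hJ, hA, Finset.mem_filter, Finset.mem_univ, true_and] at haJ ⊢
      refine ⟨haJ.supPrime.ne_bot, fun b hb => ?_⟩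
      obtain ⟨c, hcompl⟩ := exists_isCompl b
      by_contra hbne
      have ha' : b ⊔ (a ⊓ c) = a := by
        have : a = a ⊓ (b ⊔ c) := by rw [hcompl.sup_eq_top, inf_top_eq]
        rw [inf_sup_left, inf_eq_right.mpr hb.le] at this
        exact this.symm
      rcases haJ.2 ha' with h | h
      · exact hb.ne h
      · have : b ≤ c := hb.le.trans (h ▸ inf_le_right)
        exact hbne (le_bot_iff.mp ((le_inf le_rfl this).trans hcompl.disjoint.le_bot))
    exact congrArg Finset.card (Finset.Subset.antisymm hJA hAJ)
  · -- J.card = A.card → J = A → complemented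
    intro hcard
    have hJA : J = A := (Finset.eq_of_subset_of_card_le hAJ hcard.le).symm
    have hatom : ∀ a : α, SupIrred a → IsAtom a := by
      intro a ha
      have : a ∈ A := hJA ▸ (by simp [hJ, ha])
      simpa [hA] using this
    refine ⟨fun a => ?_⟩
    set c := (J.filter (fun b => ¬ b ≤ a)).sup id with hc
    refine ⟨c, IsCompl.of_eq ?_ ?_⟩
    · rw [hc, Finset.sup_inf_distrib_left]
      refine le_bot_iff.mp (Finset.sup_le fun b hb => ?_)
      simp only [hJ, Finset.mem_filter, Finset.mem_univ, true_and] at hb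
      have hb' : IsAtom b := hatom b hb.1
      rcases (lt_or_eq_of_le (inf_le_right : a ⊓ id b ≤ id b)) with h | h
      · exact le_of_eq (hb'.2 _ h)
      · exact absurd (h.symm.trans_le inf_le_left) hb.2
    · refine top_le_iff.mp ?_
      obtain ⟨s, hsup, hirr⟩ := exists_supIrred_decomposition (⊤ : α)
      rw [← hsup]
      apply Finset.sup_le
      intro b hb
      by_cases hba : b ≤ a
      · exact le_sup_of_le_left hba
      · refine le_sup_of_le_right ?_
        rw [hc]
        exact Finset.le_sup (f := id) (by simp [hJ, hirr hb, hba])
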